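/- Class frame containment is well defined on syntactic regularities: if finite sets C and D of α have equal multiset images under G (Multiset.map G of C equals Multiset.map G of D), and C ≲_G C', then D ≲_G C'; symmetrically, if C' and D' have equal multiset images under G and C ≲_G C', then C ≲_G D'. -/
import Mathlib


/-- Class frame containment: `C ≲_G C'` iff there exists an injective map `m : C → C'`
with `G (m t) = G t` for every `t ∈ C`. -/
def FrameContain {α β : Type*} (G : α → β) (C C' : Finset α) : Prop :=
  ∃ m : {x // x ∈ C} → {x // x ∈ C'},
    Function.Injective m ∧ ∀ t : {x // x ∈ C}, G (m t).1 = G t.1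

lemma frameContain_of_le {α β : Type*} (G : α → β) :
    ∀ C C' : Finset α, Multiset.map G C.val ≤ Multiset.map G C'.val →
      FrameContain G C C' := by
  classical
  intro C
  induction C using Finset.induction_on with
  | empty =>
    intro C' _
    exact ⟨fun t => absurd t.2 (Finset.notMem_empty t.1),
      fun t => absurd t.2 (Finset.notMem_empty t.1),
      fun t => absurd t.2 (Finset.notMem_empty t.1)⟩
  | @insert a s ha ih =>
    intro C' h
    rw [Finset.insert_val_of_notMem ha, Multiset.map_cons] at h
    have hGa : G a ∈ Multiset.map G C'.val := Multiset.mem_of_le h (Multiset.mem_cons_self _ _)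
    obtain ⟨b, hbC', hGb⟩ := Multiset.mem_map.mp hGa
    have hbC'' : b ∈ C' := hbC'
    have hsplit : Multiset.map G C'.val = G a ::ₘ Multiset.map G ((C'.erase b).val) := by
      rw [Finset.erase_val, ← hGb, ← Multiset.map_cons, Multiset.cons_erase hbC']
    rw [hsplit, Multiset.cons_le_cons_iff] at h
    obtain ⟨m, hminj, hmG⟩ := ih _ h
    refine ⟨fun x => if hx : x.1 ∈ s then
        ⟨(m ⟨x.1, hx⟩).1, Finset.mem_of_mem_erase (m ⟨x.1, hx⟩).2⟩ else ⟨b, hbC''⟩,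
      ?_, ?_⟩
    · intro x y hxy
      by_cases hx : x.1 ∈ s <;> by_cases hy : y.1 ∈ s <;>
        simp only [hx, hy, dif_pos, dif_neg, not_false_iff, Subtype.mk.injEq] at hxy
      · have h2 := hminj (Subtype.ext hxy)
        simp only [Subtype.mk.injEq] at h2
        exact Subtype.ext h2
      · have hmem := (m ⟨x.1, hx⟩).2
        rw [hxy] at hmem
        exact absurd hmem (Finset.notMem_erase b C')
      · have hmem := (m ⟨y.1, hy⟩).2
        rw [← hxy] at hmem
        exact absurd hmem (Finset.notMem_erase b C')
      · have hxa : x.1 = a := (Finset.mem_insert.mp x.2).resolve_right hx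
        have hya : y.1 = a := (Finset.mem_insert.mp y.2).resolve_right hy
        exact Subtype.ext (hxa.trans hya.symm)
    · intro t
      by_cases ht : t.1 ∈ s
      · simp only [ht, dif_pos]
        exact hmG ⟨t.1, ht⟩
      · have hta : t.1 = a := (Finset.mem_insert.mp t.2).resolve_right ht
        simp only [ht, dif_neg, not_false_iff]
        rw [hGb, hta]

lemma le_of_frameContain {α β : Type*} (G : α → β) (C C' : Finset α)
    (h : FrameContain G C C') : Multiset.map G C.val ≤ Multiset.map G C'.val := by
  classical
  obtain ⟨m, hminj, hmG⟩ := h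
  have hinj : Function.Injective (fun t : {x // x ∈ C} => (m t).1) :=
    fun x y hxy => hminj (Subtype.ext hxy)
  set M : Multiset α := Multiset.map (fun t : {x // x ∈ C} => (m t).1) C.attach.val with hM
  have hnd : M.Nodup := Multiset.Nodup.map hinj C.attach.nodup
  have hsub : M ≤ C'.val := by
    rw [Multiset.le_iff_count]
    intro x
    by_cases hx : x ∈ M
    · have h1 : Multiset.count x M = 1 := Multiset.count_eq_one_of_mem hnd hx
      obtain ⟨t, _, ht⟩ := Multiset.mem_map.mp hx
      have : x ∈ C'.val := ht ▸ (m t).2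
      have h2 : 1 ≤ Multiset.count x C'.val := Multiset.one_le_count_iff_mem.mpr this
      omega
    · simp [Multiset.count_eq_zero_of_notMem hx]
  have hmapM : Multiset.map G M = Multiset.map G C.val := by
    rw [hM, Multiset.map_map]
    have : (G ∘ fun t : {x // x ∈ C} => (m t).1) = fun t : {x // x ∈ C} => G t.1 := by
      funext t; exact hmG t
    rw [this, Finset.attach_val]
    exact Multiset.attach_map_val' C.val G
  calc Multiset.map G C.val = Multiset.map G M := hmapM.symm
    _ ≤ Multiset.map G C'.val := Multiset.map_le_map hsub

lemma frameContain_iff {α β : Type*} (G : α → β) (C C' : Finset α) :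
    FrameContain G C C' ↔ Multiset.map G C.val ≤ Multiset.map G C'.val :=
  ⟨le_of_frameContain G C C', frameContain_of_le G C C'⟩

/-- Class frame containment is well defined on syntactic regularities: it is invariant
under replacing either side by a class frame with the same multiset image under `G`. -/
theorem frameContain_well_defined {α β : Type*} (G : α → β) :
    (∀ C D C' : Finset α, Multiset.map G C.val = Multiset.map G D.val →
      FrameContain G C C' → FrameContain G D C') ∧
    (∀ C C' D' : Finset α, Multiset.map G C'.val = Multiset.map G D'.val →
      FrameContain G C C' → FrameContain G C D') := by
  constructor
  · intro C D C' hCD h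
    rw [frameContain_iff] at h ⊢
    rwa [← hCD]
  · intro C C' D' hCD h
    rw [frameContain_iff] at h ⊢
    rwa [← hCD]
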